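/- Let w_q : V(F_q) → C be the function assigning to each binary cubic form v its number of roots in P^1(F_q) (so w_q(0) = q+1). Then the Fourier transform of w_q satisfies: \hat{w_q}(v) = 1 + q^{-1} if v = 0; \hat{w_q}(v) = q^{-1} if v ≠ 0 and v has a triple root in P^1(F_q); and \hat{w_q}(v) = 0 otherwise. -/

import Mathlib

open scoped Classical
open MvPolynomial Matrix

noncomputable section

/-- The standard additive character `t ↦ exp(2πi·Tr_{F/F_p}(t)/p)` of a finite field `F`
of characteristic `p`. -/
def psiF (p : ℕ) [Fact p.Prime] (F : Type*) [Field F] [Fintype F] [CharP F p] (t : F) : ℂ :=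
  letI : Algebra (ZMod p) F := ZMod.algebra F p
  Complex.exp (2 * Real.pi * Complex.I * ((Algebra.trace (ZMod p) F t).val : ℂ) / (p : ℂ))

variable {F : Type*} [Field F] [Fintype F]

/-- The binary cubic form `a u³ + b u²v + c uv² + d v³` attached to `(a,b,c,d)`. -/
def toPoly (x : Fin 4 → F) : MvPolynomial (Fin 2) F :=
  C (x 0) * X 0 ^ 3 + C (x 1) * X 0 ^ 2 * X 1 + C (x 2) * X 0 * X 1 ^ 2 + C (x 3) * X 1 ^ 3

/-- The number of roots of the binary cubic form `x` in `ℙ¹(F)`. -/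
def numRoots (x : Fin 4 → F) : ℕ :=
  Nat.card {P : Projectivization F (Fin 2 → F) // MvPolynomial.eval P.rep (toPoly x) = 0}

/-- The bilinear form `[x,x'] = aa' + bb'/3 + cc'/3 + dd'` on binary cubic forms. -/
def bformBC (x y : Fin 4 → F) : F :=
  x 0 * y 0 + x 1 * y 1 / 3 + x 2 * y 2 / 3 + x 3 * y 3

/-- The Fourier transform on the space of binary cubic forms over `F`. -/
def FTBC (p : ℕ) [Fact p.Prime] [CharP F p] (Φ : (Fin 4 → F) → ℂ) (y : Fin 4 → F) : ℂ :=
  ((Fintype.card F : ℂ) ^ 4)⁻¹ * ∑ x : Fin 4 → F, Φ x * psiF p F (bformBC x y)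

/-! ### Auxiliary definitions and lemmas -/

set_option linter.unusedSectionVars false

instance : Finite (Projectivization F (Fin 2 → F)) := Quotient.finite _
instance : Fintype (Projectivization F (Fin 2 → F)) := Fintype.ofFinite _

/-- `psiF` as a bundled additive character. -/
def psiA (p : ℕ) [Fact p.Prime] (F : Type*) [Field F] [Fintype F] [CharP F p] : AddChar F ℂ :=
  letI : Algebra (ZMod p) F := ZMod.algebra F p
  letI : NeZero p := ⟨(Fact.out : p.Prime).ne_zero⟩
  ZMod.stdAddChar.compAddMonoidHom (Algebra.trace (ZMod p) F).toAddMonoidHom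

lemma psiA_eq (p : ℕ) [Fact p.Prime] [CharP F p] (t : F) : psiA p F t = psiF p F t := by
  letI : Algebra (ZMod p) F := ZMod.algebra F p
  letI : NeZero p := ⟨(Fact.out : p.Prime).ne_zero⟩
  show ZMod.stdAddChar (Algebra.trace (ZMod p) F t) = _
  rw [ZMod.stdAddChar_apply, ZMod.toCircle_apply, psiF]

lemma psiA_nontriv (p : ℕ) [Fact p.Prime] [CharP F p] {t : F} (ht : t ≠ 0) :
    ∃ u : F, psiA p F (u * t) ≠ 1 := by
  letI : Algebra (ZMod p) F := ZMod.algebra F p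
  letI : NeZero p := ⟨(Fact.out : p.Prime).ne_zero⟩
  have hrc : ringChar F = p := ringChar.eq F p
  obtain ⟨b, hb⟩ : ∃ b : F, Algebra.trace (ZMod p) F (t * b) ≠ 0 := by
    subst hrc
    exact FiniteField.trace_to_zmod_nondegenerate F ht
  refine ⟨b, fun hcon => hb ?_⟩
  have h1 : ZMod.stdAddChar (Algebra.trace (ZMod p) F (t * b)) = 1 := by
    rw [mul_comm t b]; exact hcon
  have h0 : ZMod.stdAddChar (0 : ZMod p) = 1 := AddChar.map_zero_eq_one _
  exact ZMod.injective_stdAddChar (h1.trans h0.symm)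

lemma psiA_sum (p : ℕ) [Fact p.Prime] [CharP F p] (t : F) :
    ∑ u : F, psiA p F (u * t) = if t = 0 then (Fintype.card F : ℂ) else 0 := by
  split_ifs with h
  · subst h; simp [AddChar.map_zero_eq_one]
  · obtain ⟨u₀, hu₀⟩ := psiA_nontriv p h
    have hz : ∑ u : F, ((psiA p F).mulShift t) u = 0 := by
      rw [AddChar.sum_eq_zero_iff_ne_zero]
      intro hz
      apply hu₀
      have := DFunLike.congr_fun hz u₀
      simpa [AddChar.mulShift_apply, mul_comm] using this
    simpa [AddChar.mulShift_apply, mul_comm] using hz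

lemma addchar_sum (psi : AddChar F ℂ) (s : Finset (Fin 4)) (f : Fin 4 → F) :
    psi (∑ i ∈ s, f i) = ∏ i ∈ s, psi (f i) := by
  induction s using Finset.cons_induction with
  | empty => simp [AddChar.map_zero_eq_one]
  | cons a s ha ih => rw [Finset.sum_cons, Finset.prod_cons, AddChar.map_add_eq_mul, ih]

/-- The coefficient vector of the cube `(r₀ u + r₁ v)³`. -/
def cubeV (r : Fin 2 → F) : Fin 4 → F :=
  ![r 0 ^ 3, 3 * r 0 ^ 2 * r 1, 3 * r 0 * r 1 ^ 2, r 1 ^ 3]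

lemma eval_toPoly (x : Fin 4 → F) (r : Fin 2 → F) (h3 : (3:F) ≠ 0) :
    MvPolynomial.eval r (toPoly x) = bformBC x (cubeV r) := by
  simp [toPoly, bformBC, cubeV]
  field_simp

lemma cubeV_ne_zero {r : Fin 2 → F} (hr : r ≠ 0) : cubeV r ≠ 0 := by
  intro h
  apply hr
  have h0 := congrFun h 0
  have h3 := congrFun h 3
  simp [cubeV] at h0 h3
  funext i
  fin_cases i <;> simp [h0, h3]

lemma cubeV_zero : cubeV (0 : Fin 2 → F) = 0 := by
  funext i; fin_cases i <;> simp [cubeV]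

lemma cubeV_smul (a : F) (r : Fin 2 → F) : cubeV (a • r) = a ^ 3 • cubeV r := by
  funext i
  fin_cases i <;> simp [cubeV] <;> ring

lemma toPoly_smul_cubeV (u : F) (r : Fin 2 → F) :
    toPoly (u • cubeV r) = C u * (C (r 0) * X 0 + C (r 1) * X 1) ^ 3 := by
  simp only [toPoly, cubeV, Pi.smul_apply, smul_eq_mul]
  simp only [Matrix.cons_val_zero, Matrix.cons_val_one, Matrix.head_cons,
    Matrix.cons_val_two, Matrix.tail_cons, Matrix.cons_val_three]
  simp only [_root_.map_mul, map_pow, map_ofNat]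
  ring

lemma bformBC_add_smul (x v w : Fin 4 → F) (u : F) :
    bformBC x (v + u • w) = bformBC x v + u * bformBC x w := by
  simp only [bformBC, Pi.add_apply, Pi.smul_apply, smul_eq_mul]
  ring

/-- The exponents of the four monomials of a binary cubic. -/
def ddBC : Fin 4 → (Fin 2 →₀ ℕ)
  | 0 => Finsupp.single 0 3
  | 1 => Finsupp.single 0 2 + Finsupp.single 1 1
  | 2 => Finsupp.single 0 1 + Finsupp.single 1 2
  | 3 => Finsupp.single 1 3

lemma toPoly_eq_monomials (x : Fin 4 → F) :
    toPoly x = monomial (ddBC 0) (x 0) + monomial (ddBC 1) (x 1)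
      + monomial (ddBC 2) (x 2) + monomial (ddBC 3) (x 3) := by
  rw [toPoly]
  rw [C_mul_X_pow_eq_monomial]
  rw [show (C (x 1) * X 0 ^ 2 * X 1 : MvPolynomial (Fin 2) F) = monomial (ddBC 1) (x 1) by
    rw [C_mul_X_pow_eq_monomial, ← pow_one (X 1), X_pow_eq_monomial, monomial_mul, mul_one]; rfl]
  rw [show (C (x 2) * X 0 * X 1 ^ 2 : MvPolynomial (Fin 2) F) = monomial (ddBC 2) (x 2) by
    rw [← pow_one (X 0), C_mul_X_pow_eq_monomial, X_pow_eq_monomial, monomial_mul, mul_one]; rfl]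
  rw [C_mul_X_pow_eq_monomial]
  rfl

lemma ddBC_injective : Function.Injective ddBC := by
  intro i j h
  fin_cases i <;> fin_cases j <;> first
    | rfl
    | (exfalso; revert h; intro h;
       have h0 := DFunLike.congr_fun h 0; have h1 := DFunLike.congr_fun h 1;
       simp [ddBC, Finsupp.single_apply] at h0 h1)

lemma coeff_toPoly (x : Fin 4 → F) (i : Fin 4) : coeff (ddBC i) (toPoly x) = x i := by
  rw [toPoly_eq_monomials]
  simp only [coeff_add, coeff_monomial, ddBC_injective.eq_iff]
  fin_cases i <;> simp

lemma toPoly_injective : Function.Injective (toPoly (F := F)) := by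
  intro x y h
  funext i
  rw [← coeff_toPoly x i, ← coeff_toPoly y i, h]

lemma card_proj : Fintype.card (Projectivization F (Fin 2 → F)) = Fintype.card F + 1 := by
  have hfib : ∀ P : Projectivization F (Fin 2 → F),
      Fintype.card {r : {r : Fin 2 → F // r ≠ 0} // Projectivization.mk F r.1 r.2 = P}
        = Fintype.card F - 1 := by
    intro P
    rw [← Fintype.card_units (α := F)]
    refine (Fintype.card_of_bijective (f := fun u : Fˣ =>
      (⟨⟨(u:F) • P.rep, smul_ne_zero u.ne_zero P.rep_nonzero⟩, by
        conv_rhs => rw [← P.mk_rep]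
        exact (Projectivization.mk_eq_mk_iff F _ _ _ P.rep_nonzero).2 ⟨u, rfl⟩⟩ :
        {r : {r : Fin 2 → F // r ≠ 0} // Projectivization.mk F r.1 r.2 = P})) ⟨?_, ?_⟩).symm
    · intro u u' h
      have h2 : (u:F) • P.rep = (u':F) • P.rep := congrArg (fun z => z.1.1) h
      exact Units.ext (smul_left_injective F P.rep_nonzero h2)
    · rintro ⟨⟨r, hr⟩, hmk⟩
      rw [← P.mk_rep, Projectivization.mk_eq_mk_iff] at hmk
      obtain ⟨a, ha⟩ := hmk
      exact ⟨a, by ext : 2; exact ha⟩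
  have h1 : Fintype.card {r : Fin 2 → F // r ≠ 0}
      = Fintype.card (Projectivization F (Fin 2 → F)) * (Fintype.card F - 1) := by
    rw [← Fintype.card_congr (Equiv.sigmaFiberEquiv
      (fun r : {r : Fin 2 → F // r ≠ 0} => Projectivization.mk F r.1 r.2))]
    rw [Fintype.card_sigma]
    simp [hfib, Finset.sum_const, mul_comm]
  have h2 : Fintype.card {r : Fin 2 → F // r ≠ 0} = Fintype.card F ^ 2 - 1 := by
    rw [Fintype.card_subtype_compl]
    simp [Fintype.card_fun]
  have hq2 : 2 ≤ Fintype.card F := Fintype.one_lt_card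
  set q := Fintype.card F
  have hkey : Fintype.card (Projectivization F (Fin 2 → F)) * (q - 1) = (q + 1) * (q - 1) := by
    rw [← h1, h2]
    cases' Nat.exists_eq_add_of_le hq2 with k hk
    rw [hk]
    have e1 : 2 + k - 1 = k + 1 := by omega
    have e2 : (2 + k) ^ 2 = k * k + 4 * k + 4 := by ring
    have e3 : (2 + k + 1) * (k + 1) = k * k + 4 * k + 3 := by ring
    rw [e1, e2, e3]
    omega
  exact Nat.eq_of_mul_eq_mul_right (by omega) hkey

lemma cube_prop (h3 : (3:F) ≠ 0) {u c : F} (hu : u ≠ 0) (hc : c ≠ 0) {r r' : Fin 2 → F}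
    (hr : r ≠ 0) (hr' : r' ≠ 0) (h : u • cubeV r = c • cubeV r') :
    ∃ b : Fˣ, b • r = r' := by
  have h0 := congrFun h 0
  have h1 := congrFun h 1
  have h3' := congrFun h 3
  simp only [Pi.smul_apply, smul_eq_mul, cubeV, Matrix.cons_val_zero, Matrix.cons_val_one,
    Matrix.head_cons, Matrix.cons_val_two, Matrix.tail_cons, Matrix.cons_val_three] at h0 h1 h3'
  by_cases hr0 : r 0 = 0
  · have hr1 : r 1 ≠ 0 := by
      intro hr1; apply hr; funext i; fin_cases i <;> simp [hr0, hr1]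
    have hr'0 : r' 0 = 0 := by
      have : c * r' 0 ^ 3 = 0 := by rw [← h0, hr0]; ring
      rcases mul_eq_zero.1 this with h' | h'
      · exact absurd h' hc
      · exact pow_eq_zero_iff (by norm_num) |>.1 h'
    have hr'1 : r' 1 ≠ 0 := by
      intro hr'1; apply hr'; funext i; fin_cases i <;> simp [hr'0, hr'1]
    refine ⟨Units.mk0 (r' 1 / r 1) (div_ne_zero hr'1 hr1), ?_⟩
    funext i
    fin_cases i <;> simp [Units.smul_def, hr0, hr'0]
    field_simp
  · have hr'0 : r' 0 ≠ 0 := by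
      intro hr'0
      apply hu
      have : u * r 0 ^ 3 = 0 := by rw [h0, hr'0]; ring
      rcases mul_eq_zero.1 this with h' | h'
      · exact h'
      · exact absurd (pow_eq_zero_iff (by norm_num) |>.1 h') hr0
    have h1' : u * r 0 ^ 2 * r 1 = c * r' 0 ^ 2 * r' 1 := by
      apply mul_left_cancel₀ h3
      linear_combination h1
    have key : c * r' 0 ^ 2 * (r 0 * r' 1 - r' 0 * r 1) = 0 := by
      linear_combination r 1 * h0 - r 0 * h1'
    have key2 : r 0 * r' 1 = r' 0 * r 1 := by
      rcases mul_eq_zero.1 key with h' | h'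
      · rcases mul_eq_zero.1 h' with h'' | h''
        · exact absurd h'' hc
        · exact absurd (pow_eq_zero_iff (by norm_num) |>.1 h'') hr'0
      · exact sub_eq_zero.1 h'
    refine ⟨Units.mk0 (r' 0 / r 0) (div_ne_zero hr'0 hr0), ?_⟩
    funext i
    fin_cases i <;> simp [Units.smul_def]
    · field_simp
    · field_simp
      linear_combination -key2

set_option maxHeartbeats 1000000 in
/-- the Fourier transform of the root-counting function of binary cubic forms. -/
theorem stmt0 (p : ℕ) [Fact p.Prime] [CharP F p] (hp : p ≠ 3) (v : Fin 4 → F) :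
    FTBC p (fun x => (numRoots x : ℂ)) v =
      if v = 0 then 1 + (Fintype.card F : ℂ)⁻¹
      else if ∃ c s t : F, toPoly v = C c * (C s * X 0 + C t * X 1) ^ 3 then
        (Fintype.card F : ℂ)⁻¹
      else 0 := by
  classical
  have h3p : (3:F) ≠ 0 := by
    intro h
    have h3 : ((3:ℕ) : F) = 0 := by exact_mod_cast h
    have := (CharP.cast_eq_zero_iff F p 3).1 h3
    exact hp ((Nat.prime_dvd_prime_iff_eq Fact.out (by norm_num)).1 this)
  set q := Fintype.card F with hq
  have hq0 : (q:ℂ) ≠ 0 := Nat.cast_ne_zero.2 Fintype.card_ne_zero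
  -- rewrite numRoots as a sum over ℙ¹
  have hroots : ∀ x : Fin 4 → F, ((numRoots x : ℂ))
      = ∑ P : Projectivization F (Fin 2 → F),
          (if bformBC x (cubeV P.rep) = 0 then (1:ℂ) else 0) := by
    intro x
    rw [numRoots, Nat.card_eq_fintype_card, Fintype.card_subtype, Finset.card_filter]
    push_cast
    refine Finset.sum_congr rfl fun P _ => ?_
    rw [eval_toPoly x P.rep h3p]
  -- the Dirac delta via character sums
  have hdelta : ∀ t : F, (if t = 0 then (1:ℂ) else 0)
      = (q:ℂ)⁻¹ * ∑ u : F, psiA p F (u * t) := by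
    intro t
    rw [psiA_sum]
    split_ifs
    · rw [inv_mul_cancel₀ hq0]
    · rw [mul_zero]
  -- the 4-dimensional character sum
  have hsum4 : ∀ w : Fin 4 → F,
      ∑ x : Fin 4 → F, psiA p F (bformBC x w) = if w = 0 then (q:ℂ)^4 else 0 := by
    intro w
    set W : Fin 4 → F := ![w 0, w 1 / 3, w 2 / 3, w 3] with hW
    have hb : ∀ x : Fin 4 → F, bformBC x w = ∑ i, x i * W i := by
      intro x
      simp only [hW, Fin.sum_univ_four, Matrix.cons_val_zero, Matrix.cons_val_one,
        Matrix.head_cons, Matrix.cons_val_two, Matrix.tail_cons, Matrix.cons_val_three, bformBC]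
      ring
    calc ∑ x : Fin 4 → F, psiA p F (bformBC x w)
        = ∑ x : Fin 4 → F, ∏ i, psiA p F (x i * W i) := by
          refine Finset.sum_congr rfl fun x _ => ?_
          rw [hb, addchar_sum]
      _ = ∏ i, ∑ t : F, psiA p F (t * W i) := (Fintype.prod_sum fun i t => psiA p F (t * W i)).symm
      _ = ∏ i, (if W i = 0 then (q:ℂ) else 0) := by
          exact Finset.prod_congr rfl fun i _ => psiA_sum p (W i)
      _ = if w = 0 then (q:ℂ)^4 else 0 := by
          by_cases hw : w = 0
          · rw [if_pos hw]
            have : ∀ i, W i = 0 := by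
              intro i; fin_cases i <;> simp [hW, hw]
            simp only [this, if_pos rfl]
            rw [Finset.prod_const]
            simp
          · rw [if_neg hw]
            obtain ⟨j, hj⟩ : ∃ j, W j ≠ 0 := by
              by_contra hcon
              push_neg at hcon
              apply hw
              have h0 := hcon 0; have h1 := hcon 1; have h2 := hcon 2; have h3 := hcon 3
              simp only [hW, Matrix.cons_val_zero, Matrix.cons_val_one, Matrix.head_cons,
                Matrix.cons_val_two, Matrix.tail_cons, Matrix.cons_val_three,
                div_eq_zero_iff] at h0 h1 h2 h3
              funext i
              fin_cases i <;> simp [h0, h1.resolve_right h3p, h2.resolve_right h3p, h3]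
            exact Finset.prod_eq_zero (Finset.mem_univ j) (if_neg hj)
  -- main reduction
  have key : FTBC p (fun x => (numRoots x : ℂ)) v
      = (q:ℂ)⁻¹ * ∑ P : Projectivization F (Fin 2 → F),
          (((Finset.univ.filter (fun u : F => v + u • cubeV P.rep = 0)).card : ℂ)) := by
    rw [FTBC]
    have step1 : ∑ x : Fin 4 → F, (numRoots x : ℂ) * psiF p F (bformBC x v)
        = ∑ P : Projectivization F (Fin 2 → F), ∑ x : Fin 4 → F,
            (if bformBC x (cubeV P.rep) = 0 then (1:ℂ) else 0) * psiA p F (bformBC x v) := by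
      rw [Finset.sum_comm]
      refine Finset.sum_congr rfl fun x _ => ?_
      rw [hroots x, ← psiA_eq, Finset.sum_mul]
    rw [step1]
    have step2 : ∀ P : Projectivization F (Fin 2 → F),
        ∑ x : Fin 4 → F, (if bformBC x (cubeV P.rep) = 0 then (1:ℂ) else 0)
            * psiA p F (bformBC x v)
        = (q:ℂ)^3 * ((Finset.univ.filter (fun u : F => v + u • cubeV P.rep = 0)).card : ℂ) := by
      intro P
      set cP := cubeV P.rep
      calc ∑ x : Fin 4 → F, (if bformBC x cP = 0 then (1:ℂ) else 0) * psiA p F (bformBC x v)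
          = (q:ℂ)⁻¹ * ∑ x : Fin 4 → F, ∑ u : F,
              psiA p F (u * bformBC x cP) * psiA p F (bformBC x v) := by
            rw [Finset.mul_sum]
            refine Finset.sum_congr rfl fun x _ => ?_
            rw [hdelta, mul_assoc, Finset.sum_mul]
        _ = (q:ℂ)⁻¹ * ∑ u : F, ∑ x : Fin 4 → F, psiA p F (bformBC x (v + u • cP)) := by
            rw [Finset.sum_comm]
            congr 1
            refine Finset.sum_congr rfl fun u _ => Finset.sum_congr rfl fun x _ => ?_
            rw [bformBC_add_smul, AddChar.map_add_eq_mul]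
            ring
        _ = (q:ℂ)⁻¹ * ∑ u : F, (if v + u • cP = 0 then (q:ℂ)^4 else 0) := by
            congr 1
            exact Finset.sum_congr rfl fun u _ => hsum4 (v + u • cP)
        _ = (q:ℂ)⁻¹ * ((q:ℂ)^4 *
              ((Finset.univ.filter (fun u : F => v + u • cP = 0)).card : ℂ)) := by
            congr 1
            rw [Finset.sum_ite, Finset.sum_const, Finset.sum_const_zero, add_zero,
              nsmul_eq_mul]
            ring
        _ = (q:ℂ)^3 * ((Finset.univ.filter (fun u : F => v + u • cP = 0)).card : ℂ) := by
            field_simp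
    rw [Finset.sum_congr rfl (fun P _ => step2 P), ← Finset.mul_sum]
    field_simp
    ring
  rw [key]
  by_cases hv0 : v = 0
  · rw [if_pos hv0]
    have hfil : ∀ P : Projectivization F (Fin 2 → F),
        (Finset.univ.filter (fun u : F => v + u • cubeV P.rep = 0)) = {(0:F)} := by
      intro P
      ext u
      simp only [Finset.mem_filter, Finset.mem_univ, true_and, Finset.mem_singleton, hv0,
        zero_add, smul_eq_zero]
      constructor
      · rintro (h | h)
        · exact h
        · exact absurd h (cubeV_ne_zero P.rep_nonzero)
      · intro h; exact Or.inl h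
    simp only [hfil, Finset.card_singleton, Nat.cast_one, Finset.sum_const, nsmul_eq_mul,
      mul_one, Finset.card_univ, card_proj]
    push_cast
    field_simp
    rfl
  · rw [if_neg hv0]
    by_cases hrep : ∃ c s t : F, toPoly v = C c * (C s * X 0 + C t * X 1) ^ 3
    · rw [if_pos hrep]
      obtain ⟨c, s, t, hvp⟩ := hrep
      have hv' : v = c • cubeV ![s, t] := by
        apply toPoly_injective
        rw [hvp, toPoly_smul_cubeV]
        simp
      have hc : c ≠ 0 := by
        intro h; apply hv0; rw [hv', h, zero_smul]
      have hst : ![s, t] ≠ 0 := by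
        intro h; apply hv0; rw [hv', h, cubeV_zero, smul_zero]
      set P₀ := Projectivization.mk F ![s,t] hst with hP₀
      obtain ⟨a, ha⟩ := Projectivization.exists_smul_eq_mk_rep F ![s,t] hst
      have hcube : cubeV P₀.rep = ((a:F))^3 • cubeV ![s,t] := by
        rw [← ha, Units.smul_def, cubeV_smul]
      have ha3 : ((a:F)^3) ≠ 0 := pow_ne_zero _ a.ne_zero
      set u₀ : F := -(c * ((a:F)^3)⁻¹) with hu₀
      have hmem : v + u₀ • cubeV P₀.rep = 0 := by
        rw [hcube, hv', smul_smul]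
        have : u₀ * (a:F)^3 = -c := by
          rw [hu₀]; field_simp
        rw [this, ← add_smul, add_neg_cancel, zero_smul]
      have huniq : ∀ (P : Projectivization F (Fin 2 → F)) (u : F),
          v + u • cubeV P.rep = 0 → P = P₀ ∧ u = u₀ := by
        intro P u h
        have hu : u ≠ 0 := by
          intro h0; apply hv0; simpa [h0] using h
        have hvP : v = (-u) • cubeV P.rep := by
          rw [neg_smul]; exact eq_neg_of_add_eq_zero_left h
        have heq : (-u) • cubeV P.rep = c • cubeV ![s,t] := by rw [← hvP, hv']
        obtain ⟨b, hb⟩ := cube_prop h3p (neg_ne_zero.2 hu) hc P.rep_nonzero hst heq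
        have hPP : P = P₀ := by
          have hmk : Projectivization.mk F P.rep P.rep_nonzero
              = Projectivization.mk F ![s,t] hst :=
            (Projectivization.mk_eq_mk_iff F _ _ P.rep_nonzero hst).2
              ⟨b⁻¹, by rw [← hb, inv_smul_smul]⟩
          rw [P.mk_rep] at hmk
          exact hmk
        refine ⟨hPP, ?_⟩
        have h2 : v + u₀ • cubeV P.rep = 0 := by rw [hPP]; exact hmem
        have h3 : (u - u₀) • cubeV P.rep = 0 := by
          have e2 : u • cubeV P.rep = u₀ • cubeV P.rep := add_left_cancel (h.trans h2.symm)
          rw [sub_smul, e2, sub_self]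
        rcases smul_eq_zero.1 h3 with h' | h'
        · exact sub_eq_zero.1 h'
        · exact absurd h' (cubeV_ne_zero P.rep_nonzero)
      have hfil : ∀ P : Projectivization F (Fin 2 → F),
          (Finset.univ.filter (fun u : F => v + u • cubeV P.rep = 0))
            = if P = P₀ then {u₀} else ∅ := by
        intro P
        split_ifs with hP
        · subst hP
          ext u
          simp only [Finset.mem_filter, Finset.mem_univ, true_and, Finset.mem_singleton]
          exact ⟨fun h => (huniq _ _ h).2, fun h => by rw [h]; exact hmem⟩
        · ext u
          simp only [Finset.mem_filter, Finset.mem_univ, true_and, Finset.notMem_empty,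
            iff_false]
          exact fun h => hP (huniq _ _ h).1
      rw [Finset.sum_congr rfl (fun P _ => by rw [hfil P])]
      have : ∑ P : Projectivization F (Fin 2 → F),
          (((if P = P₀ then ({u₀} : Finset F) else ∅).card : ℂ))
          = ∑ P : Projectivization F (Fin 2 → F), (if P = P₀ then (1:ℂ) else 0) := by
        refine Finset.sum_congr rfl fun P _ => ?_
        split_ifs <;> simp
      rw [this, Finset.sum_ite_eq' Finset.univ P₀ (fun _ => (1:ℂ)),
        if_pos (Finset.mem_univ P₀), mul_one]
    · rw [if_neg hrep]
      have hfil : ∀ P : Projectivization F (Fin 2 → F),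
          (Finset.univ.filter (fun u : F => v + u • cubeV P.rep = 0)) = ∅ := by
        intro P
        ext u
        simp only [Finset.mem_filter, Finset.mem_univ, true_and, Finset.notMem_empty,
          iff_false]
        intro h
        apply hrep
        have hvP : v = (-u) • cubeV P.rep := by
          rw [neg_smul]; exact eq_neg_of_add_eq_zero_left h
        exact ⟨-u, P.rep 0, P.rep 1, by rw [hvP, toPoly_smul_cubeV]⟩
      simp [hfil]

end
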